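/- arXiv:2003.12666 — 2 statements merged into one kernel-verified Lean document; each statement's English description precedes it below -/
import Mathlib

section
/- Let A ∈ ℝ^{I×F} and B ∈ ℝ^{J×F} be matrices with Kruskal ranks k_A and k_B, where neither A nor B has a zero column. Then the Kruskal rank of the Khatri-Rao product A ⊙ B ∈ ℝ^{IJ×F} satisfies k_{A⊙B} ≥ min(k_A + k_B − 1, F). -/
/-- The Kruskal rank of a matrix: the largest `k ≤ F` such that every set of `k`
columns is linearly independent. -/
noncomputable def kruskalRank {m : Type*} {F : ℕ} (A : Matrix m (Fin F) ℝ) : ℕ :=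
  sSup {k : ℕ | k ≤ F ∧ ∀ s : Finset (Fin F), s.card = k →
    LinearIndependent ℝ (fun j : s => fun i => A i (j : Fin F))}

/-- The Khatri-Rao (column-wise Kronecker) product. -/
def khatriRao {I J : Type*} {F : ℕ} (A : Matrix I (Fin F) ℝ) (B : Matrix J (Fin F) ℝ) :
    Matrix (I × J) (Fin F) ℝ :=
  fun p f => A p.1 f * B p.2 f

open Matrix

lemma kr_bdd {m : Type*} {F : ℕ} :
    BddAbove {k : ℕ | k ≤ F ∧ ∀ s : Finset (Fin F), s.card = k →
      LinearIndependent ℝ (fun j : s => fun i => (0 : Matrix m (Fin F) ℝ) i (j : Fin F))} :=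
  ⟨F, fun _ hk => hk.1⟩

lemma kr_bdd' {m : Type*} {F : ℕ} (A : Matrix m (Fin F) ℝ) :
    BddAbove {k : ℕ | k ≤ F ∧ ∀ s : Finset (Fin F), s.card = k →
      LinearIndependent ℝ (fun j : s => fun i => A i (j : Fin F))} :=
  ⟨F, fun _ hk => hk.1⟩

lemma kr_mem {m : Type*} {F : ℕ} (A : Matrix m (Fin F) ℝ) :
    kruskalRank A ≤ F ∧ ∀ s : Finset (Fin F), s.card = kruskalRank A →
      LinearIndependent ℝ (fun j : s => fun i => A i (j : Fin F)) := by
  have h0 : (0 : ℕ) ∈ {k : ℕ | k ≤ F ∧ ∀ s : Finset (Fin F), s.card = k →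
      LinearIndependent ℝ (fun j : s => fun i => A i (j : Fin F))} := by
    refine ⟨Nat.zero_le F, fun s hs => ?_⟩
    rw [Finset.card_eq_zero] at hs
    subst hs
    haveI : IsEmpty ((∅ : Finset (Fin F)) : Type) :=
      ⟨fun x => (Finset.notMem_empty _ x.2)⟩
    exact linearIndependent_empty_type
  exact Nat.sSup_mem ⟨0, h0⟩ (kr_bdd' A)

/-- Any set of at most `kruskalRank A` columns is linearly independent. -/
lemma kr_indep {m : Type*} {F : ℕ} (A : Matrix m (Fin F) ℝ) (s : Finset (Fin F))
    (hs : s.card ≤ kruskalRank A) :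
    LinearIndependent ℝ (fun j : s => fun i => A i (j : Fin F)) := by
  obtain ⟨hle, hind⟩ := kr_mem A
  obtain ⟨t, hst, -, ht⟩ := Finset.exists_subsuperset_card_eq (Finset.subset_univ s)
    hs (by simpa using hle)
  have hindt := hind t ht
  have : (fun j : s => fun i => A i (j : Fin F)) =
      (fun j : t => fun i => A i (j : Fin F)) ∘ (fun j : s => (⟨j.1, hst j.2⟩ : t)) := rfl
  rw [this]
  exact hindt.comp _ (fun a b hab => Subtype.ext (by simpa using congrArg Subtype.val hab))

lemma kr_one {m : Type*} {F : ℕ} (hF : 1 ≤ F) (A : Matrix m (Fin F) ℝ)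
    (hA : ∀ f, (fun i => A i f) ≠ 0) : 1 ≤ kruskalRank A := by
  apply le_csSup (kr_bdd' A)
  refine ⟨hF, fun s hs => ?_⟩
  obtain ⟨f, rfl⟩ := Finset.card_eq_one.mp hs
  haveI : Unique ({f} : Finset (Fin F)) :=
    ⟨⟨⟨f, Finset.mem_singleton_self f⟩⟩, fun x => Subtype.ext (Finset.mem_singleton.mp x.2)⟩
  refine linearIndependent_unique_iff.mpr ?_
  have hdf : ((default : ({f} : Finset (Fin F))) : Fin F) = f :=
    Finset.mem_singleton.mp (Subtype.prop default)
  simp only [hdf]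
  exact hA f

/-- If a matrix has an independent family of columns indexed by `κ`, its rank is
at least `card κ`. -/
lemma card_le_rank {n : ℕ} {ι : Type*} [Fintype ι] (M : Matrix (Fin n) ι ℝ)
    {κ : Type*} [Fintype κ] (e : κ → ι)
    (h : LinearIndependent ℝ (fun u : κ => fun i => M i (e u))) :
    Fintype.card κ ≤ M.rank := by
  rw [Matrix.rank_eq_finrank_span_cols]
  have hle : Submodule.span ℝ (Set.range (fun u : κ => fun i => M i (e u))) ≤
      Submodule.span ℝ (Set.range Mᵀ) := by
    apply Submodule.span_mono
    rintro _ ⟨u, rfl⟩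
    exact ⟨e u, rfl⟩
  calc Fintype.card κ
      = Module.finrank ℝ (Submodule.span ℝ (Set.range (fun u : κ => fun i => M i (e u)))) :=
        (finrank_span_eq_card h).symm
    _ ≤ _ := Submodule.finrank_mono hle

/-- Sylvester-type: if `X * Y = 0` then `rank X + rank Y ≤ card` of the middle type. -/
lemma rank_add_rank_le_of_mul_eq_zero {a b c : Type*} [Fintype a] [Fintype b] [Fintype c]
    (X : Matrix a b ℝ) (Y : Matrix b c ℝ) (h : X * Y = 0) :
    X.rank + Y.rank ≤ Fintype.card b := by
  have hr : LinearMap.range Y.mulVecLin ≤ LinearMap.ker X.mulVecLin := by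
    rintro _ ⟨v, rfl⟩
    simp only [LinearMap.mem_ker, Matrix.mulVecLin_apply]
    rw [Matrix.mulVec_mulVec, h, Matrix.zero_mulVec]
  have h2 : Y.rank ≤ Module.finrank ℝ (LinearMap.ker X.mulVecLin) :=
    Submodule.finrank_mono hr
  have h3 := LinearMap.finrank_range_add_finrank_ker X.mulVecLin
  have h4 : Module.finrank ℝ (b → ℝ) = Fintype.card b := by
    simp [Module.finrank_pi]
  rw [h4] at h3
  have : X.rank = Module.finrank ℝ (LinearMap.range X.mulVecLin) := rfl
  omega

theorem stmt_3 (I J F : ℕ)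
    (A : Matrix (Fin I) (Fin F) ℝ) (B : Matrix (Fin J) (Fin F) ℝ)
    (hA : ∀ f, (fun i => A i f) ≠ 0) (hB : ∀ f, (fun j => B j f) ≠ 0) :
    min (kruskalRank A + kruskalRank B - 1) F ≤ kruskalRank (khatriRao A B) := by
  classical
  set kA := kruskalRank A with hkA
  set kB := kruskalRank B with hkB
  set k := min (kA + kB - 1) F with hk
  rcases Nat.eq_zero_or_pos k with hk0 | hk1
  · rw [hk0]; exact Nat.zero_le _
  have hF : 1 ≤ F := le_trans hk1 (min_le_right _ _)
  have hkA1 : 1 ≤ kA := kr_one hF A hA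
  have hkB1 : 1 ≤ kB := kr_one hF B hB
  apply le_csSup (kr_bdd' (khatriRao A B))
  refine ⟨min_le_right _ _, fun S hS => ?_⟩
  rw [Fintype.linearIndependent_iff]
  intro g hg
  by_contra hne
  push_neg at hne
  obtain ⟨j0, hj0⟩ := hne
  -- the coefficient vector on all of Fin F
  set d : Fin F → ℝ := fun f => if h : f ∈ S then g ⟨f, h⟩ else 0 with hd
  set T : Finset (Fin F) := Finset.univ.filter (fun f => d f ≠ 0) with hT
  have hTS : T ⊆ S := by
    intro f hf
    rw [hT, Finset.mem_filter] at hf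
    by_contra hfS
    exact hf.2 (by simp [hd, hfS])
  have hTne : (j0 : Fin F) ∈ T := by
    rw [hT, Finset.mem_filter]
    refine ⟨Finset.mem_univ _, ?_⟩
    simpa [hd, j0.2] using hj0
  set ω := T.card with hω
  have hω1 : 1 ≤ ω := Finset.card_pos.mpr ⟨_, hTne⟩
  have hωk : ω ≤ k := hS ▸ Finset.card_le_card hTS
  -- the two matrices
  set X : Matrix (Fin I) T ℝ := fun i t => A i (t : Fin F) with hX
  set Y : Matrix T (Fin J) ℝ := fun t j => d (t : Fin F) * B j (t : Fin F) with hY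
  have hXY : X * Y = 0 := by
    ext i j
    have hgij : ∑ x : S, g x * (A i (x : Fin F) * B j (x : Fin F)) = 0 := by
      have := congrFun hg (i, j)
      simpa [khatriRao, Finset.sum_apply] using this
    have h1 : ∑ x : S, g x * (A i (x : Fin F) * B j (x : Fin F)) =
        ∑ f ∈ S, d f * (A i f * B j f) := by
      rw [← Finset.sum_attach S (fun f => d f * (A i f * B j f))]
      apply Finset.sum_congr rfl
      intro x _
      simp [hd, x.2]
    have h2 : ∑ f ∈ S, d f * (A i f * B j f) = ∑ f ∈ T, d f * (A i f * B j f) := by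
      symm
      apply Finset.sum_subset hTS
      intro f _ hfT
      have : d f = 0 := by
        by_contra hdf
        exact hfT (by rw [hT, Finset.mem_filter]; exact ⟨Finset.mem_univ _, hdf⟩)
      simp [this]
    have h3 : (X * Y) i j = ∑ f ∈ T, d f * (A i f * B j f) := by
      rw [Matrix.mul_apply, ← Finset.sum_attach T (fun f => d f * (A i f * B j f))]
      apply Finset.sum_congr rfl
      intro t _
      simp [hX, hY]; ring
    rw [h3, ← h2, ← h1, hgij]
    rfl
  -- rank lower bounds
  have hrX : min kA ω ≤ X.rank := by
    obtain ⟨U, hUT, hU⟩ := Finset.exists_subset_card_eq (s := T) (n := min kA ω)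
      (min_le_right _ _)
    have hind : LinearIndependent ℝ (fun u : U => fun i => A i (u : Fin F)) :=
      kr_indep A U (hU.le.trans (min_le_left _ _))
    have := card_le_rank X (fun u : U => (⟨u.1, hUT u.2⟩ : T)) hind
    simpa [hU] using this
  have hrY : min kB ω ≤ Y.rank := by
    rw [← Matrix.rank_transpose Y]
    obtain ⟨V, hVT, hV⟩ := Finset.exists_subset_card_eq (s := T) (n := min kB ω)
      (min_le_right _ _)
    have hind : LinearIndependent ℝ (fun v : V => fun j => B j (v : Fin F)) :=
      kr_indep B V (hV.le.trans (min_le_left _ _))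
    have hunit : ∀ v : V, d (v : Fin F) ≠ 0 := by
      intro v
      have : (v : Fin F) ∈ T := hVT v.2
      rw [hT, Finset.mem_filter] at this
      exact this.2
    have hind2 : LinearIndependent ℝ
        (fun v : V => fun j => d (v : Fin F) * B j (v : Fin F)) := by
      have := hind.units_smul (fun v : V => Units.mk0 (d (v : Fin F)) (hunit v))
      exact this
    have := card_le_rank Yᵀ (fun v : V => (⟨v.1, hVT v.2⟩ : T)) hind2
    simpa [hV] using this
  have hsyl := rank_add_rank_le_of_mul_eq_zero X Y hXY
  have hcard : Fintype.card T = ω := Fintype.card_coe T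
  rw [hcard] at hsyl
  have hkle : k ≤ kA + kB - 1 := min_le_left _ _
  omega
end

section
/- Let A₂ ∈ ℝ^{I₂×R}, A₃ ∈ ℝ^{I₃×R}, A₄ ∈ ℝ^{I₄×R}. For generic choices of these matrices (i.e., for all (A₂, A₃, A₄) outside a set of Lebesgue measure zero in ℝ^{(I₂+I₃+I₄)R}), if I₂·I₃·I₄ ≥ R then the Khatri-Rao product A₂ ⊙ A₃ ⊙ A₄ ∈ ℝ^{I₂I₃I₄×R} has full column rank R. -/
open MeasureTheory
open MvPolynomial Set

theorem aux_measurableSet_zero {ι : Type*} [Fintype ι] (p : MvPolynomial ι ℝ) :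
    MeasurableSet {x : ι → ℝ | eval x p = 0} :=
  (isClosed_eq p.continuous_eval continuous_const).measurableSet

theorem aux_fin : ∀ (n : ℕ) (p : MvPolynomial (Fin n) ℝ), p ≠ 0 →
    volume {x : Fin n → ℝ | eval x p = 0} = 0 := by
  intro n
  induction n with
  | zero =>
    intro p hp
    obtain ⟨a, rfl⟩ := MvPolynomial.C_surjective (Fin 0) p
    have ha : a ≠ 0 := fun h => hp (by rw [h, map_zero])
    have : {x : Fin 0 → ℝ | eval x (C a) = 0} = ∅ := by
      ext x; simp [ha]
    rw [this, measure_empty]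
  | succ n ih =>
    intro p hp
    set q : Polynomial (MvPolynomial (Fin n) ℝ) := finSuccEquiv ℝ n p with hqdef
    have hq : q ≠ 0 := by
      intro h
      apply hp
      have h2 := congrArg (finSuccEquiv ℝ n).symm h
      rw [map_zero] at h2
      rwa [hqdef, AlgEquiv.symm_apply_apply] at h2
    have hcoeff : q.coeff q.natDegree ≠ 0 := by
      rw [← Polynomial.leadingCoeff]
      exact Polynomial.leadingCoeff_ne_zero.mpr hq
    set A : Set ((Fin n → ℝ) × ℝ) :=
      {sy | Polynomial.eval sy.2 (Polynomial.map (eval sy.1) q) = 0} with hAdef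
    have hA : MeasurableSet A := by
      have hmeas : Measurable fun sy : (Fin n → ℝ) × ℝ =>
          Polynomial.eval sy.2 (Polynomial.map (eval sy.1) q) := by
        simp only [Polynomial.eval_map, Polynomial.eval₂_eq_sum_range]
        exact Finset.measurable_sum _ fun i _ =>
          ((q.coeff i).continuous_eval.measurable.comp measurable_fst).mul
            (measurable_snd.pow_const i)
      exact hmeas (measurableSet_singleton 0)
    have hT : MeasurePreserving
        (Prod.swap ∘ ⇑(MeasurableEquiv.piFinSuccAbove (fun _ : Fin (n+1) => ℝ) 0))
        volume ((volume : Measure (Fin n → ℝ)).prod volume) := by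
      rw [volume_pi, volume_pi]
      exact Measure.measurePreserving_swap.comp
        (measurePreserving_piFinSuccAbove (fun _ => (volume : Measure ℝ)) 0)
    have hZ : {x : Fin (n+1) → ℝ | eval x p = 0}
        = (Prod.swap ∘ ⇑(MeasurableEquiv.piFinSuccAbove (fun _ : Fin (n+1) => ℝ) 0)) ⁻¹' A := by
      ext x
      have hx : Fin.cons (x 0) (fun j => x j.succ) = x := Fin.cons_self_tail x
      have : eval x p = Polynomial.eval (x 0) (Polynomial.map (eval fun j => x j.succ) q) := by
        rw [← hx]
        rw [eval_eq_eval_mv_eval']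
        simp [Fin.cons_self_tail, hqdef]
      simp only [Set.mem_setOf_eq, Set.mem_preimage, Function.comp_apply, hAdef]
      rw [this]
      constructor
      · intro h
        convert h using 3 <;> simp [MeasurableEquiv.piFinSuccAbove, Fin.zero_succAbove] <;> rfl
      · intro h
        convert h using 3 <;> simp [MeasurableEquiv.piFinSuccAbove, Fin.zero_succAbove] <;> rfl
    rw [hZ, hT.measure_preimage hA.nullMeasurableSet, Measure.measure_prod_null hA]
    have hN : volume {s : Fin n → ℝ | eval s (q.coeff q.natDegree) = 0} = 0 := ih _ hcoeff
    have hae : ∀ᵐ s : Fin n → ℝ, eval s (q.coeff q.natDegree) ≠ 0 := by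
      rw [ae_iff]
      simpa using hN
    filter_upwards [hae] with s hs
    have hq0 : Polynomial.map (eval s) q ≠ 0 := by
      intro h
      apply hs
      have := congrArg (fun r => Polynomial.coeff r q.natDegree) h
      simpa [Polynomial.coeff_map] using this
    have hfin : {y : ℝ | Polynomial.eval y (Polynomial.map (eval s) q) = 0}.Finite :=
      Polynomial.finite_setOf_isRoot hq0
    simp only [Pi.zero_apply]
    have : Prod.mk s ⁻¹' A = {y : ℝ | Polynomial.eval y (Polynomial.map (eval s) q) = 0} := rfl
    rw [this]
    exact hfin.measure_zero _


theorem aux_null {ι : Type*} [Fintype ι] (p : MvPolynomial ι ℝ) (hp : p ≠ 0) :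
    volume {x : ι → ℝ | eval x p = 0} = 0 := by
  classical
  set e : Fin (Fintype.card ι) ≃ ι := (Fintype.equivFin ι).symm with hedef
  set p' : MvPolynomial (Fin (Fintype.card ι)) ℝ := rename e.symm p with hp'def
  have hp' : p' ≠ 0 := by
    intro h
    exact hp (rename_injective _ e.symm.injective (by rw [← hp'def, h, map_zero]))
  set G := (MeasurableEquiv.piCongrLeft (fun _ : ι => ℝ) e).symm with hGdef
  have hG : MeasurePreserving G volume volume :=
    (volume_measurePreserving_piCongrLeft (fun _ : ι => ℝ) e).symm _
  have hset : {x : ι → ℝ | eval x p = 0}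
      = G ⁻¹' {y : Fin (Fintype.card ι) → ℝ | eval y p' = 0} := by
    ext x
    have hGx : (G x : Fin (Fintype.card ι) → ℝ) = fun j => x (e j) := rfl
    simp only [Set.mem_preimage, Set.mem_setOf_eq, hGx, hp'def, eval_rename]
    have : ((fun j => x (e j)) ∘ e.symm) = x := funext fun b => congrArg x (e.apply_symm_apply b)
    rw [this]
  rw [hset, hG.measure_preimage (aux_measurableSet_zero p').nullMeasurableSet]
  exact aux_fin _ p' hp'


theorem aux_theta (I₂ I₃ I₄ R : ℕ) :
    MeasurePreserving
      (fun (p : (Fin I₂ → Fin R → ℝ) × (Fin I₃ → Fin R → ℝ) × (Fin I₄ → Fin R → ℝ))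
        (k : (Fin I₂ × Fin R) ⊕ (Fin I₃ × Fin R) ⊕ (Fin I₄ × Fin R)) =>
        Sum.elim (fun ir => p.1 ir.1 ir.2)
          (Sum.elim (fun ir => p.2.1 ir.1 ir.2) (fun ir => p.2.2 ir.1 ir.2)) k)
      volume volume := by
  have hmeas : Measurable
      (fun (p : (Fin I₂ → Fin R → ℝ) × (Fin I₃ → Fin R → ℝ) × (Fin I₄ → Fin R → ℝ))
        (k : (Fin I₂ × Fin R) ⊕ (Fin I₃ × Fin R) ⊕ (Fin I₄ × Fin R)) =>
        Sum.elim (fun ir => p.1 ir.1 ir.2)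
          (Sum.elim (fun ir => p.2.1 ir.1 ir.2) (fun ir => p.2.2 ir.1 ir.2)) k) := by
    apply measurable_pi_lambda
    rintro (⟨i,r⟩|⟨i,r⟩|⟨i,r⟩) <;> simp <;> fun_prop
  refine ⟨hmeas, ?_⟩
  conv_rhs => rw [volume_pi]
  refine (Measure.pi_eq (μ := fun _ : (Fin I₂ × Fin R) ⊕ (Fin I₃ × Fin R) ⊕ (Fin I₄ × Fin R) =>
    (volume : Measure ℝ)) fun s hs => ?_).symm
  rw [Measure.map_apply hmeas (MeasurableSet.univ_pi hs)]
  have hpre : (fun (p : (Fin I₂ → Fin R → ℝ) × (Fin I₃ → Fin R → ℝ) × (Fin I₄ → Fin R → ℝ))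
        (k : (Fin I₂ × Fin R) ⊕ (Fin I₃ × Fin R) ⊕ (Fin I₄ × Fin R)) =>
        Sum.elim (fun ir => p.1 ir.1 ir.2)
          (Sum.elim (fun ir => p.2.1 ir.1 ir.2) (fun ir => p.2.2 ir.1 ir.2)) k) ⁻¹'
        (univ.pi s)
      = (univ.pi fun i => univ.pi fun r => s (.inl (i,r))) ×ˢ
        ((univ.pi fun i => univ.pi fun r => s (.inr (.inl (i,r)))) ×ˢ
         (univ.pi fun i => univ.pi fun r => s (.inr (.inr (i,r))))) := by
    ext ⟨A,B,C⟩
    simp only [Set.mem_preimage, Set.mem_pi, Set.mem_univ, true_implies, Set.mem_prod]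
    constructor
    · intro h
      exact ⟨fun i r => h (.inl (i,r)), fun i r => h (.inr (.inl (i,r))),
        fun i r => h (.inr (.inr (i,r)))⟩
    · rintro ⟨h₂, h₃, h₄⟩ (⟨i,r⟩|⟨i,r⟩|⟨i,r⟩)
      · exact h₂ i r
      · exact h₃ i r
      · exact h₄ i r
  rw [hpre]
  rw [Measure.volume_eq_prod, Measure.prod_prod, Measure.volume_eq_prod, Measure.prod_prod]
  simp only [volume_pi, Measure.pi_pi]
  rw [Fintype.prod_sum_type, Fintype.prod_sum_type, Fintype.prod_prod_type,
    Fintype.prod_prod_type, Fintype.prod_prod_type]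


theorem stmt_9 (I₂ I₃ I₄ R : ℕ) (hdim : I₂ * I₃ * I₄ ≥ R) :
    volume {p : (Fin I₂ → Fin R → ℝ) × (Fin I₃ → Fin R → ℝ) × (Fin I₄ → Fin R → ℝ) |
      ¬ ∀ v : Fin R → ℝ,
        Matrix.mulVec
          (fun (q : Fin I₂ × Fin I₃ × Fin I₄) (r : Fin R) =>
            p.1 q.1 r * p.2.1 q.2.1 r * p.2.2 q.2.2 r) v = 0 → v = 0} = 0 := by
  classical
  have h' : R ≤ I₂ * (I₃ * I₄) := by rwa [← mul_assoc]
  set e : (Fin I₂ × Fin I₃ × Fin I₄) ≃ Fin (I₂ * (I₃ * I₄)) :=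
    (Equiv.prodCongr (Equiv.refl (Fin I₂)) finProdFinEquiv).trans finProdFinEquiv with hedef
  set σk : Fin R → Fin I₂ × Fin I₃ × Fin I₄ := fun k => e.symm (Fin.castLE h' k) with hσdef
  set Mp : Matrix (Fin R) (Fin R)
      (MvPolynomial ((Fin I₂ × Fin R) ⊕ (Fin I₃ × Fin R) ⊕ (Fin I₄ × Fin R)) ℝ) :=
    Matrix.of fun k r =>
      X (.inl ((σk k).1, r)) * X (.inr (.inl ((σk k).2.1, r))) *
        X (.inr (.inr ((σk k).2.2, r))) with hMpdef
  set P := Mp.det with hPdef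
  -- the witness showing P ≠ 0
  set w : ((Fin I₂ × Fin R) ⊕ (Fin I₃ × Fin R) ⊕ (Fin I₄ × Fin R)) → ℝ :=
    Sum.elim (fun ir => ((ir.2 : ℕ) : ℝ) ^ ((I₃ * I₄) * (ir.1 : ℕ)))
      (Sum.elim (fun ir => ((ir.2 : ℕ) : ℝ) ^ (I₄ * (ir.1 : ℕ)))
        (fun ir => ((ir.2 : ℕ) : ℝ) ^ ((ir.1 : ℕ)))) with hwdef
  have hexp : ∀ k : Fin R,
      ((σk k).2.2 : ℕ) + I₄ * ((σk k).2.1 : ℕ) + I₃ * I₄ * ((σk k).1 : ℕ) = (k : ℕ) := by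
    intro k
    have h1 : e (σk k) = Fin.castLE h' k := e.apply_symm_apply _
    have h2 := congrArg Fin.val h1
    simp only [hedef, Equiv.trans_apply, Equiv.prodCongr_apply, Equiv.coe_refl,
      Prod.map_fst, Prod.map_snd, Prod.map_apply, id_eq, finProdFinEquiv_apply_val,
      Fin.coe_castLE] at h2
    omega
  have hPw : eval w P = (Matrix.of fun k r : Fin R => ((r : ℕ) : ℝ) ^ (k : ℕ)).det := by
    rw [hPdef, RingHom.map_det]
    congr 1
    ext k r
    simp only [hMpdef, RingHom.mapMatrix_apply, Matrix.map_apply, Matrix.of_apply, map_mul,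
      eval_X, hwdef, Sum.elim_inl, Sum.elim_inr]
    rw [← pow_add, ← pow_add, ← hexp k]
    congr 1
    ring
  have hvand : (Matrix.of fun k r : Fin R => ((r : ℕ) : ℝ) ^ (k : ℕ)).det ≠ 0 := by
    have hT : (Matrix.of fun k r : Fin R => ((r : ℕ) : ℝ) ^ (k : ℕ))
        = Matrix.transpose (Matrix.vandermonde fun r : Fin R => ((r : ℕ) : ℝ)) := rfl
    rw [hT, Matrix.det_transpose]
    refine Matrix.det_vandermonde_ne_zero_iff.mpr fun a b hab => ?_
    exact Fin.val_injective (Nat.cast_injective hab)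
  have hP : P ≠ 0 := by
    intro h0
    rw [h0, map_zero] at hPw
    exact hvand hPw.symm
  set Θ := fun (p : (Fin I₂ → Fin R → ℝ) × (Fin I₃ → Fin R → ℝ) × (Fin I₄ → Fin R → ℝ))
        (k : (Fin I₂ × Fin R) ⊕ (Fin I₃ × Fin R) ⊕ (Fin I₄ × Fin R)) =>
        Sum.elim (fun ir => p.1 ir.1 ir.2)
          (Sum.elim (fun ir => p.2.1 ir.1 ir.2) (fun ir => p.2.2 ir.1 ir.2)) k with hΘdef
  have hsub : {p : (Fin I₂ → Fin R → ℝ) × (Fin I₃ → Fin R → ℝ) × (Fin I₄ → Fin R → ℝ) |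
      ¬ ∀ v : Fin R → ℝ,
        Matrix.mulVec
          (fun (q : Fin I₂ × Fin I₃ × Fin I₄) (r : Fin R) =>
            p.1 q.1 r * p.2.1 q.2.1 r * p.2.2 q.2.2 r) v = 0 → v = 0}
      ⊆ Θ ⁻¹' {x | eval x P = 0} := by
    intro p hp
    simp only [Set.mem_setOf_eq] at hp
    by_contra hne
    simp only [Set.mem_preimage, Set.mem_setOf_eq] at hne
    apply hp
    intro v hv
    have hdet : (Matrix.of fun k r : Fin R =>
        p.1 (σk k).1 r * p.2.1 (σk k).2.1 r * p.2.2 (σk k).2.2 r).det ≠ 0 := by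
      have h1 : eval (Θ p) P = (Mp.map (eval (Θ p))).det := by
        rw [hPdef]; exact RingHom.map_det _ _
      have h2 : Mp.map (eval (Θ p)) = Matrix.of fun k r : Fin R =>
          p.1 (σk k).1 r * p.2.1 (σk k).2.1 r * p.2.2 (σk k).2.2 r := by
        ext k r
        simp [hMpdef, Matrix.map_apply, hΘdef]
      rw [h1, h2] at hne
      exact hne
    have hv' : (Matrix.of fun k r : Fin R =>
        p.1 (σk k).1 r * p.2.1 (σk k).2.1 r * p.2.2 (σk k).2.2 r).mulVec v = 0 :=
      funext fun k => congrFun hv (σk k)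
    exact Matrix.eq_zero_of_mulVec_eq_zero hdet hv'
  refine le_antisymm ?_ zero_le
  calc volume {p : (Fin I₂ → Fin R → ℝ) × (Fin I₃ → Fin R → ℝ) × (Fin I₄ → Fin R → ℝ) |
      ¬ ∀ v : Fin R → ℝ,
        Matrix.mulVec
          (fun (q : Fin I₂ × Fin I₃ × Fin I₄) (r : Fin R) =>
            p.1 q.1 r * p.2.1 q.2.1 r * p.2.2 q.2.2 r) v = 0 → v = 0}
      ≤ volume (Θ ⁻¹' {x | eval x P = 0}) := measure_mono hsub
    _ = volume {x | eval x P = 0} :=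
        (aux_theta I₂ I₃ I₄ R).measure_preimage (aux_measurableSet_zero P).nullMeasurableSet
    _ = 0 := aux_null P hP
end
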